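/- arXiv:2206.04455 — 2 statements merged into one kernel-verified Lean document; each statement's English description precedes it below -/
import Mathlib

section
/- Let Ω ⊂ ℂⁿ be a bounded domain with C² boundary and let ρ be a C² defining function for Ω. Then there exist a constant A > 0, a neighborhood U of ∂Ω, and a C² defining function ϱ for Ω such that ϱ is subharmonic on Ω (Δϱ ≥ 0 on Ω) and ϱ = ρ + Aρ² on U. -/
open MeasureTheory Filter Complex Set Bornology ENNReal

noncomputable section

/-- ℂⁿ with the Euclidean metric. -/
abbrev Cn (n : ℕ) : Type := EuclideanSpace ℂ (Fin n)


instance {n : ℕ} : MeasurableSpace (Cn n) := borel _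
instance {n : ℕ} : BorelSpace (Cn n) := ⟨rfl⟩
instance {n : ℕ} : MeasureSpace (Cn n) :=
  letI : InnerProductSpace ℝ (Cn n) := InnerProductSpace.complexToReal
  measureSpaceOfInnerProductSpace

/-- The `j`-th standard basis vector of ℂⁿ. -/
def sdir {n : ℕ} (j : Fin n) : Cn n := EuclideanSpace.single j 1

/-- Wirtinger derivative `∂f/∂z_j`. -/
def wder {n : ℕ} (j : Fin n) (f : Cn n → ℂ) (z : Cn n) : ℂ :=
  (fderiv ℝ f z (sdir j) - Complex.I * fderiv ℝ f z (Complex.I • sdir j)) / 2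

/-- Conjugate Wirtinger derivative `∂f/∂z̄_j`. -/
def wbar {n : ℕ} (j : Fin n) (f : Cn n → ℂ) (z : Cn n) : ℂ :=
  (fderiv ℝ f z (sdir j) + Complex.I * fderiv ℝ f z (Complex.I • sdir j)) / 2

/-- Complex Hessian `∂²f/∂z_j∂z̄_k`. -/
def hessC {n : ℕ} (j k : Fin n) (f : Cn n → ℂ) (z : Cn n) : ℂ :=
  wder j (fun w => wbar k f w) z

/-- Levi form `Σ_{j,k} (∂²φ/∂z_j∂z̄_k) ξ_j ξ̄_k` of a real-valued function. -/
def levi {n : ℕ} (φ : Cn n → ℝ) (z : Cn n) (ξ : Fin n → ℂ) : ℝ :=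
  (∑ j, ∑ k, hessC j k (fun w => (φ w : ℂ)) z * ξ j * (starRingEnd ℂ) (ξ k)).re

/-- Euclidean Laplacian on ℂⁿ ≅ ℝ^{2n}. -/
def lap {n : ℕ} (φ : Cn n → ℝ) (z : Cn n) : ℝ :=
  ∑ j, (fderiv ℝ (fun w => fderiv ℝ φ w (sdir j)) z (sdir j)
    + fderiv ℝ (fun w => fderiv ℝ φ w (Complex.I • sdir j)) z (Complex.I • sdir j))

/-- Squared norm of the real gradient `|∇φ|²`. -/
def gradSq {n : ℕ} (φ : Cn n → ℝ) (z : Cn n) : ℝ :=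
  ∑ j, ((fderiv ℝ φ z (sdir j)) ^ 2 + (fderiv ℝ φ z (Complex.I • sdir j)) ^ 2)

/-- `ρ` is a `C²` defining function for the bounded open set `Ω ⊂ ℂⁿ`:
`ρ` is real-valued and `C²` on a neighborhood `U` of the closure of `Ω`,
`Ω = {ρ < 0}`, and `∇ρ ≠ 0` on `∂Ω`. -/
structure IsDefining {n : ℕ} (Ω : Set (Cn n)) (ρ : Cn n → ℝ) : Prop where
  isOpen : IsOpen Ω
  bounded : IsBounded Ω
  exU : ∃ U : Set (Cn n), IsOpen U ∧ closure Ω ⊆ U ∧ ContDiffOn ℝ 2 ρ U ∧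
    Ω = {z | z ∈ U ∧ ρ z < 0}
  grad_ne : ∀ z ∈ frontier Ω, fderiv ℝ ρ z ≠ 0

/-- Squared Hardy norm `‖f‖²_{H²(Ω)} = limsup_{ε→0⁺} ∫_{∂Ω_ε} |f|² dσ_ε`,
where `∂Ω_ε` carries the `(2n-1)`-dimensional Hausdorff measure. -/
def hardySq {n : ℕ} (Ω : Set (Cn n)) (ρ : Cn n → ℝ) (f : Cn n → ℂ) : ℝ≥0∞ :=
  Filter.limsup
    (fun ε : ℝ =>
      ∫⁻ z in frontier {w | w ∈ Ω ∧ ρ w < -ε}, ENNReal.ofReal (‖f z‖ ^ 2)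
        ∂ μH[2 * (n : ℝ) - 1])
    (nhdsWithin 0 (Set.Ioi 0))

/-- `f` belongs to the Hardy space `H²(Ω)`. -/
def MemHardy {n : ℕ} (Ω : Set (Cn n)) (ρ : Cn n → ℝ) (f : Cn n → ℂ) : Prop :=
  DifferentiableOn ℂ f Ω ∧ hardySq Ω ρ f < ⊤

/-- The subdomain `Ω_ε = {z ∈ Ω : ρ(z) < -ε}`. -/
def subdom {n : ℕ} (Ω : Set (Cn n)) (ρ : Cn n → ℝ) (ε : ℝ) : Set (Cn n) :=
  {w | w ∈ Ω ∧ ρ w < -ε}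



/-- clamp function: 0 for x ≤ 0, x on [0,1], 1 for x ≥ 1 -/
def gfun (x : ℝ) : ℝ := min 1 (max 0 x)

lemma gfun_cont : Continuous gfun := continuous_const.min (continuous_const.max continuous_id)

lemma gfun_nonneg (x : ℝ) : 0 ≤ gfun x := le_min zero_le_one (le_max_left 0 x)
lemma gfun_le_one (x : ℝ) : gfun x ≤ 1 := min_le_left _ _
lemma gfun_of_nonpos {x : ℝ} (h : x ≤ 0) : gfun x = 0 := by
  simp [gfun, max_eq_left h, min_eq_right zero_le_one]
lemma gfun_of_one_le {x : ℝ} (h : 1 ≤ x) : gfun x = 1 := by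
  simp [gfun, min_eq_left, le_max_of_le_right h]
lemma gfun_mono : Monotone gfun := fun a b hab => min_le_min le_rfl (max_le_max le_rfl hab)
lemma gfun_id {x : ℝ} (h0 : 0 ≤ x) (h1 : x ≤ 1) : gfun x = x := by
  simp [gfun, max_eq_right h0, min_eq_right h1]

variable {A : ℝ}

/-- second derivative of the gluing function -/
def lam2 (A t : ℝ) : ℝ := 2*A * gfun ((t + 3/(4*A)) / (1/(2*A)))
/-- first derivative of the gluing function -/
def lam1 (A t : ℝ) : ℝ := 2*A * ∫ s in (-(3/(4*A)))..t, gfun ((s + 3/(4*A)) / (1/(2*A)))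
/-- the gluing function -/
def lam (A t : ℝ) : ℝ := ∫ s in (0:ℝ)..t, lam1 A s

lemma lam2_cont : Continuous (lam2 A) := by
  apply continuous_const.mul; exact gfun_cont.comp (by continuity)

lemma lam2_nonneg (hA : 0 < A) (t : ℝ) : 0 ≤ lam2 A t :=
  mul_nonneg (by positivity) (gfun_nonneg _)

lemma integrand_cont : Continuous (fun s : ℝ => gfun ((s + 3/(4*A)) / (1/(2*A)))) :=
  gfun_cont.comp (by continuity)

lemma lam1_hasDeriv (t : ℝ) : HasDerivAt (lam1 A) (lam2 A t) t := by
  have h := intervalIntegral.integral_hasDerivAt_right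
    (integrand_cont (A := A) |>.intervalIntegrable (-(3/(4*A))) t)
    (integrand_cont.stronglyMeasurableAtFilter _ _) integrand_cont.continuousAt
  exact (h.const_mul (2*A))

lemma lam1_cont : Continuous (lam1 A) := by
  have : Differentiable ℝ (lam1 A) := fun t => (lam1_hasDeriv t).differentiableAt
  exact this.continuous

lemma lam_hasDeriv (t : ℝ) : HasDerivAt (lam A) (lam1 A t) t :=
  intervalIntegral.integral_hasDerivAt_right
    (lam1_cont.intervalIntegrable _ _) (lam1_cont.stronglyMeasurableAtFilter _ _)
    lam1_cont.continuousAt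

lemma lam_contDiff : ContDiff ℝ 2 (lam A) := by
  have d1 : deriv (lam A) = lam1 A := funext fun t => (lam_hasDeriv t).deriv
  have d2 : deriv (lam1 A) = lam2 A := funext fun t => (lam1_hasDeriv t).deriv
  rw [show (2 : WithTop ℕ∞) = 1 + 1 from rfl, contDiff_succ_iff_deriv]
  refine ⟨fun t => (lam_hasDeriv t).differentiableAt, by simp, ?_⟩
  rw [d1, show (1 : WithTop ℕ∞) = 0 + 1 from rfl, contDiff_succ_iff_deriv]
  exact ⟨fun t => (lam1_hasDeriv t).differentiableAt, by simp, by rw [d2]; exact contDiff_zero.mpr lam2_cont⟩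

lemma lam1_eq_zero (hA : 0 < A) {t : ℝ} (ht : t ≤ -(3/(4*A))) : lam1 A t = 0 := by
  unfold lam1
  rw [intervalIntegral.integral_symm]
  have hz : EqOn (fun s : ℝ => gfun ((s + 3/(4*A)) / (1/(2*A)))) 0 (uIcc t (-(3/(4*A)))) := by
    intro s hs
    rw [uIcc_of_le ht] at hs
    have hs2 : s + 3/(4*A) ≤ 0 := by linarith [hs.2]
    simp only [Pi.zero_apply]
    exact gfun_of_nonpos (div_nonpos_of_nonpos_of_nonneg hs2 (by positivity))
  rw [intervalIntegral.integral_congr hz]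
  simp

-- primitive evaluation: for t ≥ t2, value b * ∫_0^X gfun, X = (t-t2)/b
lemma lam1_integral_eq (hA : 0 < A) (t : ℝ) :
    lam1 A t = 2*A * ((1/(2*A)) • ∫ x in (0:ℝ)..((t + 3/(4*A))/(1/(2*A))), gfun x) := by
  unfold lam1
  congr 1
  have h1 : (∫ s in (-(3/(4*A)))..t, gfun ((s + 3/(4*A)) / (1/(2*A))))
      = ∫ u in (0:ℝ)..(t + 3/(4*A)), gfun (u / (1/(2*A))) := by
    have := intervalIntegral.integral_comp_sub_right (a := -(3/(4*A))) (b := t)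
      (fun u => gfun (u / (1/(2*A)))) (-(3/(4*A)))
    simpa [sub_neg_eq_add, add_comm] using this
  rw [h1, intervalIntegral.integral_comp_div (fun x => gfun x) (by positivity : (1:ℝ)/(2*A) ≠ 0)]
  norm_num

lemma gfun_int_one_le {X : ℝ} (hX : 1 ≤ X) : (∫ x in (0:ℝ)..X, gfun x) = X - 1/2 := by
  have hadd := intervalIntegral.integral_add_adjacent_intervals (μ := MeasureTheory.volume)
    (gfun_cont.intervalIntegrable (0:ℝ) 1) (gfun_cont.intervalIntegrable 1 X)
  have h01 : (∫ x in (0:ℝ)..1, gfun x) = 1/2 := by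
    have : EqOn gfun (fun x => x) (uIcc (0:ℝ) 1) := by
      intro s hs; rw [uIcc_of_le zero_le_one] at hs; exact gfun_id hs.1 hs.2
    rw [intervalIntegral.integral_congr this, integral_id]; norm_num
  have h1X : (∫ x in (1:ℝ)..X, gfun x) = X - 1 := by
    have : EqOn gfun (fun _ => (1:ℝ)) (uIcc (1:ℝ) X) := by
      intro s hs; rw [uIcc_of_le hX] at hs; exact gfun_of_one_le hs.1
    rw [intervalIntegral.integral_congr this, intervalIntegral.integral_const]
    simp
  rw [← hadd, h01, h1X]; ring

lemma lam1_eq (hA : 0 < A) {t : ℝ} (ht : -(1/(4*A)) ≤ t) : lam1 A t = 1 + 2*A*t := by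
  rw [lam1_integral_eq hA]
  have hX : (1:ℝ) ≤ (t + 3/(4*A))/(1/(2*A)) := by
    rw [le_div_iff₀ (by positivity)]
    have : 1/(2*A) - 3/(4*A) = -(1/(4*A)) := by field_simp; ring
    linarith [this]
  rw [gfun_int_one_le hX]
  have hb : (1:ℝ)/(2*A) > 0 := by positivity
  have hA0 : A ≠ 0 := hA.ne'
  field_simp
  ring_nf
  field_simp

lemma lam1_nonneg (hA : 0 < A) (t : ℝ) : 0 ≤ lam1 A t := by
  rcases le_total t (-(3/(4*A))) with h | h
  · rw [lam1_eq_zero hA h]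
  · unfold lam1
    apply mul_nonneg (by positivity)
    apply intervalIntegral.integral_nonneg h
    intro u _; exact gfun_nonneg _

lemma lam1_le (hA : 0 < A) {t : ℝ} (h1 : -(3/(4*A)) ≤ t) (h2 : t ≤ -(1/(4*A))) :
    lam1 A t ≤ (1/(2*A)) * lam2 A t := by
  unfold lam1 lam2
  have hmono : ∀ s ∈ Icc (-(3/(4*A))) t,
      gfun ((s + 3/(4*A)) / (1/(2*A))) ≤ gfun ((t + 3/(4*A)) / (1/(2*A))) := by
    intro s hs
    exact gfun_mono (by apply div_le_div_of_nonneg_right ?_ ?_ |>.trans_eq rfl <;> [linarith [hs.2]; positivity])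
  have hint : (∫ s in (-(3/(4*A)))..t, gfun ((s + 3/(4*A)) / (1/(2*A))))
      ≤ ∫ _ in (-(3/(4*A)))..t, gfun ((t + 3/(4*A)) / (1/(2*A))) := by
    apply intervalIntegral.integral_mono_on h1
      (integrand_cont.intervalIntegrable _ _)
      (intervalIntegrable_const : IntervalIntegrable _ MeasureTheory.volume _ _)
    exact hmono
  have hconst : (∫ _ in (-(3/(4*A)))..t, gfun ((t + 3/(4*A)) / (1/(2*A))))
      = (t + 3/(4*A)) * gfun ((t + 3/(4*A)) / (1/(2*A))) := by
    rw [intervalIntegral.integral_const]; rw [smul_eq_mul]; ring_nf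
  have hlen : t + 3/(4*A) ≤ 1/(2*A) := by
    have : -(1/(4*A)) + 3/(4*A) = 1/(2*A) := by field_simp; ring
    linarith
  have hg := gfun_nonneg ((t + 3/(4*A)) / (1/(2*A)))
  calc 2*A * ∫ s in (-(3/(4*A)))..t, gfun ((s + 3/(4*A)) / (1/(2*A)))
      ≤ 2*A * ((t + 3/(4*A)) * gfun ((t + 3/(4*A)) / (1/(2*A)))) := by
        apply mul_le_mul_of_nonneg_left _ (by positivity)
        rw [← hconst]; exact hint
    _ ≤ 2*A * ((1/(2*A)) * gfun ((t + 3/(4*A)) / (1/(2*A)))) := by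
        apply mul_le_mul_of_nonneg_left _ (by positivity)
        exact mul_le_mul_of_nonneg_right hlen hg
    _ = (1/(2*A)) * (2*A * gfun ((t + 3/(4*A)) / (1/(2*A)))) := by ring

lemma lam2_eq (hA : 0 < A) {t : ℝ} (ht : -(1/(4*A)) ≤ t) : lam2 A t = 2*A := by
  unfold lam2
  rw [gfun_of_one_le, mul_one]
  rw [le_div_iff₀ (by positivity)]
  have : 1/(2*A) - 3/(4*A) = -(1/(4*A)) := by field_simp; ring
  linarith [this]

lemma lam_eq (hA : 0 < A) {t : ℝ} (ht : -(1/(4*A)) ≤ t) : lam A t = t + A * t^2 := by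
  unfold lam
  have hcong : EqOn (lam1 A) (fun s => 1 + 2*A*s) (uIcc (0:ℝ) t) := by
    intro s hs
    apply lam1_eq hA
    rcases le_total (0:ℝ) t with h | h
    · rw [uIcc_of_le h] at hs; linarith [hs.1, hA, one_div_pos.mpr (by positivity : (0:ℝ) < 4*A)]
    · rw [uIcc_of_ge h] at hs; linarith [hs.1]
  rw [intervalIntegral.integral_congr hcong]
  have h1 : IntervalIntegrable (fun _ : ℝ => (1:ℝ)) MeasureTheory.volume 0 t := intervalIntegrable_const
  have h2 : IntervalIntegrable (fun s : ℝ => 2*A*s) MeasureTheory.volume 0 t := by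
    apply Continuous.intervalIntegrable; continuity
  rw [intervalIntegral.integral_add h1 h2]
  simp only [intervalIntegral.integral_const, smul_eq_mul, mul_one]
  rw [intervalIntegral.integral_const_mul, integral_id]
  ring

lemma lam_nonneg (hA : 0 < A) {t : ℝ} (ht : 0 ≤ t) : 0 ≤ lam A t := by
  unfold lam
  exact intervalIntegral.integral_nonneg ht fun u _ => lam1_nonneg hA u

lemma lam_neg (hA : 0 < A) {t : ℝ} (ht : t < 0) : lam A t < 0 := by
  unfold lam
  have hm0 : max t (-(1/(4*A))) < 0 := max_lt ht (neg_lt_zero.mpr (by positivity))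
  have hsplit := intervalIntegral.integral_add_adjacent_intervals (μ := MeasureTheory.volume)
    ((lam1_cont (A := A)).intervalIntegrable t (max t (-(1/(4*A)))))
    ((lam1_cont (A := A)).intervalIntegrable (max t (-(1/(4*A)))) 0)
  rw [intervalIntegral.integral_symm, ← hsplit]
  have h1 : 0 ≤ ∫ s in t..(max t (-(1/(4*A)))), lam1 A s :=
    intervalIntegral.integral_nonneg (le_max_left _ _) fun u _ => lam1_nonneg hA u
  have h2 : 0 < ∫ s in (max t (-(1/(4*A))))..0, lam1 A s := by
    apply intervalIntegral.intervalIntegral_pos_of_pos_on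
      (lam1_cont.intervalIntegrable _ _) ?_ hm0
    intro x hx
    have hx1 : -(1/(4*A)) ≤ x := le_of_lt (lt_of_le_of_lt (le_max_right _ _) hx.1)
    rw [lam1_eq hA hx1]
    have hgt := mul_lt_mul_of_pos_left (lt_of_le_of_lt (le_max_right t _) hx.1) (show (0:ℝ) < 2*A by positivity)
    have heq : 2*A*(-(1/(4*A))) = -(1/2) := by field_simp; ring
    nlinarith
  linarith

namespace SubhAux
open ContinuousLinearMap
variable {n : ℕ}

lemma decomp (w : Cn n) :
    ∑ j, ((w j).re • sdir j + (w j).im • (Complex.I • sdir j)) = w := by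
  ext k
  rw [WithLp.ofLp_sum, Finset.sum_apply]
  have hterm : ∀ j, ((w j).re • sdir j + (w j).im • (Complex.I • sdir j)) k
      = (if k = j then w j else 0) := by
    intro j
    simp only [PiLp.add_apply, PiLp.smul_apply, PiLp.smul_apply, sdir,
      EuclideanSpace.single_apply, smul_ite, smul_zero, Complex.real_smul, smul_eq_mul]
    by_cases h : k = j <;> simp [h, Complex.ext_iff]
  simp only [hterm]
  simp

lemma clm_zero (L : Cn n →L[ℝ] ℝ) (h1 : ∀ j, L (sdir j) = 0)
    (h2 : ∀ j, L (Complex.I • sdir j) = 0) : L = 0 := by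
  ext w
  have := decomp w
  calc L w = L (∑ j, ((w j).re • sdir j + (w j).im • (Complex.I • sdir j))) := by rw [this]
    _ = 0 := by
        rw [map_sum]
        apply Finset.sum_eq_zero
        intro j _
        rw [map_add, L.map_smul, L.map_smul, h1 j, h2 j]
        simp

lemma gradSq_nonneg (φ : Cn n → ℝ) (z : Cn n) : 0 ≤ gradSq φ z :=
  Finset.sum_nonneg fun j _ => add_nonneg (sq_nonneg _) (sq_nonneg _)

lemma gradSq_pos {φ : Cn n → ℝ} {z : Cn n} (h : fderiv ℝ φ z ≠ 0) : 0 < gradSq φ z := by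
  rcases (gradSq_nonneg φ z).lt_or_eq with hlt | heq
  · exact hlt
  · exfalso
    apply h
    apply clm_zero
    · intro j
      have := (Finset.sum_eq_zero_iff_of_nonneg
        (fun j _ => add_nonneg (sq_nonneg _) (sq_nonneg _))).mp heq.symm j (Finset.mem_univ j)
      have h1 : (fderiv ℝ φ z (sdir j))^2 = 0 := by nlinarith [sq_nonneg (fderiv ℝ φ z (sdir j)), sq_nonneg (fderiv ℝ φ z (Complex.I • sdir j))]
      exact pow_eq_zero_iff (by norm_num) |>.mp h1
    · intro j
      have := (Finset.sum_eq_zero_iff_of_nonneg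
        (fun j _ => add_nonneg (sq_nonneg _) (sq_nonneg _))).mp heq.symm j (Finset.mem_univ j)
      have h1 : (fderiv ℝ φ z (Complex.I • sdir j))^2 = 0 := by nlinarith [sq_nonneg (fderiv ℝ φ z (sdir j)), sq_nonneg (fderiv ℝ φ z (Complex.I • sdir j))]
      exact pow_eq_zero_iff (by norm_num) |>.mp h1


lemma comp_fderiv {ρ : Cn n → ℝ} {U : Set (Cn n)} (hU : IsOpen U) (hρ : ContDiffOn ℝ 2 ρ U)
    (lam lam1 : ℝ → ℝ) (h1 : ∀ t, HasDerivAt lam (lam1 t) t) {w : Cn n} (hw : w ∈ U) :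
    fderiv ℝ (fun y => lam (ρ y)) w = lam1 (ρ w) • fderiv ℝ ρ w := by
  have hd : DifferentiableAt ℝ ρ w :=
    (hρ.differentiableOn (by norm_num)).differentiableAt (hU.mem_nhds hw)
  exact ((h1 (ρ w)).comp_hasFDerivAt w hd.hasFDerivAt).fderiv

lemma lap_comp {ρ : Cn n → ℝ} {U : Set (Cn n)} (hU : IsOpen U) (hρ : ContDiffOn ℝ 2 ρ U)
    (lam lam1 lam2 : ℝ → ℝ) (h1 : ∀ t, HasDerivAt lam (lam1 t) t)
    (h2 : ∀ t, HasDerivAt lam1 (lam2 t) t) {z : Cn n} (hz : z ∈ U) :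
    lap (fun w => lam (ρ w)) z = lam2 (ρ z) * gradSq ρ z + lam1 (ρ z) * lap ρ z := by
  have hdz : DifferentiableAt ℝ ρ z :=
    (hρ.differentiableOn (by norm_num)).differentiableAt (hU.mem_nhds hz)
  have key : ∀ v : Cn n,
      fderiv ℝ (fun w => fderiv ℝ (fun y => lam (ρ y)) w v) z v
      = lam2 (ρ z) * (fderiv ℝ ρ z v) * (fderiv ℝ ρ z v)
        + lam1 (ρ z) * fderiv ℝ (fun w => fderiv ℝ ρ w v) z v := by
    intro v
    have hev : (fun w => fderiv ℝ (fun y => lam (ρ y)) w v)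
        =ᶠ[nhds z] (fun w => lam1 (ρ w) * fderiv ℝ ρ w v) := by
      filter_upwards [hU.mem_nhds hz] with w hw
      rw [comp_fderiv hU hρ lam lam1 h1 hw]
      simp
    rw [hev.fderiv_eq]
    have hA : HasFDerivAt (fun w => lam1 (ρ w)) (lam2 (ρ z) • fderiv ℝ ρ z) z :=
      (h2 (ρ z)).comp_hasFDerivAt z hdz.hasFDerivAt
    have hC : ContDiffAt ℝ 1 (fderiv ℝ ρ) z :=
      (hρ.contDiffAt (hU.mem_nhds hz)).fderiv_right (by norm_num)
    have hD : DifferentiableAt ℝ (fderiv ℝ ρ) z := hC.differentiableAt (by norm_num)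
    have hB : HasFDerivAt (fun w => fderiv ℝ ρ w v)
        ((ContinuousLinearMap.apply ℝ ℝ v).comp (fderiv ℝ (fderiv ℝ ρ) z)) z :=
      (ContinuousLinearMap.apply ℝ ℝ v).hasFDerivAt.comp z hD.hasFDerivAt
    have hmul : HasFDerivAt (fun w => lam1 (ρ w) * fderiv ℝ ρ w v) _ z := hA.mul hB
    rw [hmul.fderiv, hB.fderiv]
    simp only [ContinuousLinearMap.add_apply, ContinuousLinearMap.smul_apply,
      ContinuousLinearMap.coe_comp', Function.comp_apply, ContinuousLinearMap.apply_apply,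
      smul_eq_mul]
    ring
  simp only [lap, gradSq]
  rw [Finset.mul_sum, Finset.mul_sum, ← Finset.sum_add_distrib]
  refine Finset.sum_congr rfl fun j _ => ?_
  rw [key (sdir j), key (Complex.I • sdir j)]
  ring

lemma contOn_gradSq {ρ : Cn n → ℝ} {U : Set (Cn n)} (hU : IsOpen U)
    (hρ : ContDiffOn ℝ 2 ρ U) : ContinuousOn (gradSq ρ) U := by
  have hfc : ContinuousOn (fderiv ℝ ρ) U := hρ.continuousOn_fderiv_of_isOpen hU (by norm_num)
  have key : ∀ v : Cn n, ContinuousOn (fun z => fderiv ℝ ρ z v) U :=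
    fun v => hfc.clm_apply continuousOn_const
  apply continuousOn_finset_sum
  intro j _
  exact ((key (sdir j)).pow 2).add ((key (Complex.I • sdir j)).pow 2)

lemma contOn_lap {ρ : Cn n → ℝ} {U : Set (Cn n)} (hU : IsOpen U)
    (hρ : ContDiffOn ℝ 2 ρ U) : ContinuousOn (lap ρ) U := by
  have hG : ContDiffOn ℝ 1 (fderiv ℝ ρ) U := hρ.fderiv_of_isOpen hU (by norm_num)
  have hGc : ContinuousOn (fderiv ℝ (fderiv ℝ ρ)) U :=
    hG.continuousOn_fderiv_of_isOpen hU le_rfl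
  have key : ∀ v : Cn n, ContinuousOn (fun z => fderiv ℝ (fun w => fderiv ℝ ρ w v) z v) U := by
    intro v
    apply ContinuousOn.congr (f := fun z => fderiv ℝ (fderiv ℝ ρ) z v v)
      (((hGc.clm_apply continuousOn_const).clm_apply continuousOn_const))
    intro z hz
    have hD : DifferentiableAt ℝ (fderiv ℝ ρ) z :=
      (hG.differentiableOn one_ne_zero).differentiableAt (hU.mem_nhds hz)
    have hB : HasFDerivAt (fun w => fderiv ℝ ρ w v)
        ((ContinuousLinearMap.apply ℝ ℝ v).comp (fderiv ℝ (fderiv ℝ ρ) z)) z :=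
      (ContinuousLinearMap.apply ℝ ℝ v).hasFDerivAt.comp z hD.hasFDerivAt
    show (fderiv ℝ (fun w => fderiv ℝ ρ w v) z) v = _
    rw [hB.fderiv]
    simp
  apply continuousOn_finset_sum
  intro j _
  exact (key (sdir j)).add (key (Complex.I • sdir j))

end SubhAux


/-- **Existence of a subharmonic defining function** (Lemma 2.1).
If `Ω ⊂ ℂⁿ` is a bounded domain with `C²` boundary and `ρ` is a `C²` defining function,
then there are `A > 0`, a neighborhood `U` of `∂Ω`, and a `C²` defining function `ϱ`
for `Ω` which is subharmonic on `Ω` and satisfies `ϱ = ρ + Aρ²` on `U`. -/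
theorem exists_subharmonic_defining {n : ℕ} (Ω : Set (Cn n)) (hconn : IsConnected Ω)
    (ρ : Cn n → ℝ) (hρ : IsDefining Ω ρ) :
    ∃ A : ℝ, 0 < A ∧
      ∃ U : Set (Cn n), IsOpen U ∧ frontier Ω ⊆ U ∧
        ∃ ϱ : Cn n → ℝ, IsDefining Ω ϱ ∧ (∀ z ∈ Ω, 0 ≤ lap ϱ z) ∧
          ∀ z ∈ U, ϱ z = ρ z + A * (ρ z) ^ 2 := by
  classical
  obtain ⟨U, hUo, hclU, hρC, hΩeq⟩ := hρ.exU
  have hΩo := hρ.isOpen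
  have hΩb := hρ.bounded
  have hΩU : Ω ⊆ U := fun z hz => by rw [hΩeq] at hz; exact hz.1
  have hρneg : ∀ z ∈ Ω, ρ z < 0 := fun z hz => by rw [hΩeq] at hz; exact hz.2
  have hmem : ∀ z ∈ U, ρ z < 0 → z ∈ Ω := fun z hz hneg => by rw [hΩeq]; exact ⟨hz, hneg⟩
  have hρcont : ContinuousOn ρ U := hρC.continuousOn
  by_cases hsub : Subsingleton (Cn n)
  · -- degenerate: ℂ⁰
    refine ⟨1, one_pos, ∅, isOpen_empty, ?_, ρ, hρ, ?_, by simp⟩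
    · intro z hz
      obtain ⟨w, hw⟩ := hconn.nonempty
      rw [hΩo.frontier_eq] at hz
      exact absurd ((Subsingleton.elim w z) ▸ hw) hz.2
    · intro z _
      have hL : ∀ (L : Cn n →L[ℝ] ℝ) (v : Cn n), L v = 0 := fun L v => by
        rw [Subsingleton.elim v 0, map_zero]
      have hzero : lap ρ z = 0 := by
        unfold lap
        apply Finset.sum_eq_zero
        intro j _
        rw [hL, hL, add_zero]
      rw [hzero]
  -- main case
  have hnt : Nontrivial (Cn n) := not_subsingleton_iff_nontrivial.mp hsub
  have Fne : (frontier Ω).Nonempty := by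
    rw [nonempty_iff_ne_empty]
    intro hfe
    rcases frontier_eq_empty_iff.mp hfe with h | h
    · exact hconn.nonempty.ne_empty h
    · exact NormedSpace.unbounded_univ ℝ (Cn n) (h ▸ hΩb)
  -- ρ vanishes on the boundary
  have hclle : ∀ z ∈ closure Ω, ρ z ≤ 0 := by
    intro z hz
    have hCA : ContinuousAt ρ z := hρcont.continuousAt (hUo.mem_nhds (hclU hz))
    haveI hne : (nhdsWithin z Ω).NeBot := mem_closure_iff_nhdsWithin_neBot.mp hz
    have htd : Tendsto ρ (nhdsWithin z Ω) (nhds (ρ z)) := hCA.continuousWithinAt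
    refine le_of_tendsto htd ?_
    filter_upwards [self_mem_nhdsWithin] with w hw
    exact (hρneg w hw).le
  have hFrU : frontier Ω ⊆ U := fun z hz => hclU (frontier_subset_closure hz)
  have hfr0 : ∀ z ∈ frontier Ω, ρ z = 0 := by
    intro z hz
    refine le_antisymm (hclle z (frontier_subset_closure hz)) ?_
    by_contra hng
    push_neg at hng
    rw [hΩo.frontier_eq] at hz
    exact hz.2 (hmem z (hFrU (by rwa [hΩo.frontier_eq])) hng)
  have hKc : IsCompact (closure Ω) := hΩb.isCompact_closure
  have hFrC : IsCompact (frontier Ω) :=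
    hKc.of_isClosed_subset isClosed_frontier frontier_subset_closure
  -- bound on the Laplacian
  obtain ⟨C, hC⟩ := hKc.exists_bound_of_continuousOn ((SubhAux.contOn_lap hUo hρC).mono hclU)
  set M := max C 1 with hMdef
  have hM1 : (1:ℝ) ≤ M := le_max_right _ _
  have hM0 : (0:ℝ) < M := lt_of_lt_of_le one_pos hM1
  have hMb : ∀ z ∈ closure Ω, |lap ρ z| ≤ M := fun z hz =>
    le_trans (by simpa [Real.norm_eq_abs] using hC z hz) (le_max_left _ _)
  -- lower bound on the gradient near the boundary
  obtain ⟨z0, hz0F, hz0min⟩ := hFrC.exists_isMinOn Fne ((SubhAux.contOn_gradSq hUo hρC).mono hFrU)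
  have hc0 : 0 < gradSq ρ z0 := SubhAux.gradSq_pos (hρ.grad_ne z0 hz0F)
  set c := gradSq ρ z0 / 2 with hcdef
  have hc : 0 < c := by positivity
  set V := U ∩ gradSq ρ ⁻¹' (Ioi c) with hVdef
  have hVo : IsOpen V := (SubhAux.contOn_gradSq hUo hρC).isOpen_inter_preimage hUo isOpen_Ioi
  have hFrV : frontier Ω ⊆ V := by
    intro z hz
    refine ⟨hFrU hz, ?_⟩
    have := hz0min (by exact hz)
    simp only [mem_preimage, mem_Ioi]
    calc c < gradSq ρ z0 := by rw [hcdef]; linarith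
      _ ≤ gradSq ρ z := this
  have hs0ex : ∃ s0 : ℝ, 0 < s0 ∧ ∀ z ∈ closure Ω, -s0 ≤ ρ z → c < gradSq ρ z := by
    by_cases hD : (closure Ω \ V).Nonempty
    · obtain ⟨z1, hz1, hz1max⟩ := (hKc.diff hVo).exists_isMaxOn hD
        ((hρcont.mono hclU).mono diff_subset)
      have hz1neg : ρ z1 < 0 := by
        rcases (hclle z1 hz1.1).lt_or_eq with h | h
        · exact h
        · exfalso
          apply hz1.2
          apply hFrV
          rw [hΩo.frontier_eq]
          exact ⟨hz1.1, fun hmem' => absurd h (ne_of_lt (hρneg z1 hmem'))⟩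
      refine ⟨-(ρ z1)/2, by linarith, ?_⟩
      intro z hz hge
      by_cases hzV : z ∈ V
      · exact hzV.2
      · exfalso
        have := hz1max (⟨hz, hzV⟩ : z ∈ closure Ω \ V)
        simp only [mem_setOf_eq] at this
        linarith
    · refine ⟨1, one_pos, ?_⟩
      intro z hz _
      have hzV : z ∈ V := by
        by_contra h
        exact hD ⟨z, hz, h⟩
      exact hzV.2
  obtain ⟨s0, hs0, hVs⟩ := hs0ex
  -- choice of constants
  set A := max (M/c) (1/s0) with hAdef
  have hA : 0 < A := lt_of_lt_of_le (by positivity) (le_max_left (M/c) (1/s0))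
  have hAc : M ≤ A * c := by
    have := le_max_left (M/c) (1/s0)
    rw [div_le_iff₀ hc] at this
    linarith
  have hAs : 1 ≤ A * s0 := by
    have := le_max_right (M/c) (1/s0)
    rw [div_le_iff₀ hs0] at this
    linarith
  -- the subharmonic defining function
  refine ⟨A, hA, U ∩ ρ ⁻¹' (Ioi (-(1/(4*A)))),
    hρcont.isOpen_inter_preimage hUo isOpen_Ioi, ?_, fun z => lam A (ρ z), ?_, ?_, ?_⟩
  · -- frontier ⊆ new neighborhood
    intro z hz
    refine ⟨hFrU hz, ?_⟩
    simp only [mem_preimage, mem_Ioi, hfr0 z hz]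
    exact neg_lt_zero.mpr (by positivity)
  · -- IsDefining
    refine ⟨hΩo, hΩb, ⟨U, hUo, hclU, lam_contDiff.comp_contDiffOn hρC, ?_⟩, ?_⟩
    · rw [hΩeq]
      ext z
      simp only [mem_setOf_eq]
      constructor
      · rintro ⟨h1, h2⟩
        exact ⟨h1, lam_neg (A := A) hA h2⟩
      · rintro ⟨h1, h2⟩
        refine ⟨h1, ?_⟩
        by_contra hng
        push_neg at hng
        exact absurd h2 (not_lt.mpr (lam_nonneg (A := A) hA hng))
    · intro z hz
      rw [SubhAux.comp_fderiv hUo hρC (lam A) (lam1 A) lam_hasDeriv (hFrU hz), hfr0 z hz,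
        lam1_eq hA (neg_nonpos.mpr (by positivity) : -(1/(4*A)) ≤ (0:ℝ))]
      norm_num
      exact hρ.grad_ne z hz
  · -- subharmonicity
    intro z hz
    rw [SubhAux.lap_comp hUo hρC (lam A) (lam1 A) (lam2 A) lam_hasDeriv lam1_hasDeriv (hΩU hz)]
    have ht0 : ρ z < 0 := hρneg z hz
    have hgs0 : 0 ≤ gradSq ρ z := SubhAux.gradSq_nonneg ρ z
    have hlapb := abs_le.mp (hMb z (subset_closure hz))
    have hl2 : 0 ≤ lam2 A (ρ z) := lam2_nonneg hA (ρ z)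
    have hl1 : 0 ≤ lam1 A (ρ z) := lam1_nonneg hA (ρ z)
    rcases le_or_gt (ρ z) (-(3/(4*A))) with hcase | hcase
    · rw [lam1_eq_zero hA hcase]
      simpa using mul_nonneg hl2 hgs0
    · have ht2s0 : -s0 ≤ ρ z := by
        have h1 : 1/A ≤ s0 := by
          rw [div_le_iff₀ hA]
          linarith [mul_comm A s0]
        have h2 : 3/(4*A) ≤ 1/A := by
          rw [div_le_div_iff₀ (by positivity) hA]
          nlinarith
        linarith
      have hgc : c < gradSq ρ z := hVs z (subset_closure hz) ht2s0
      rcases le_or_gt (ρ z) (-(1/(4*A))) with hcase2 | hcase2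
      · -- transition region
        have hle := lam1_le hA hcase.le hcase2
        have hle' : 2*A*(lam1 A (ρ z)) ≤ lam2 A (ρ z) := by
          have h2A : (2*A) * ((1/(2*A)) * lam2 A (ρ z)) = lam2 A (ρ z) := by
            field_simp
          calc 2*A*(lam1 A (ρ z)) ≤ 2*A*((1/(2*A)) * lam2 A (ρ z)) :=
                mul_le_mul_of_nonneg_left hle (by positivity)
            _ = lam2 A (ρ z) := h2A
        nlinarith [mul_nonneg hl2 (by linarith : (0:ℝ) ≤ gradSq ρ z - c),
          mul_nonneg hl1 (by linarith [hlapb.1] : (0:ℝ) ≤ lap ρ z + M),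
          mul_le_mul_of_nonneg_right hle' hM0.le,
          mul_le_mul_of_nonneg_left hAc hl2,
          mul_nonneg (mul_nonneg hA.le hl2) hc.le]
      · -- boundary region
        rw [lam1_eq hA hcase2.le, lam2_eq hA hcase2.le]
        have h1t : 0 < 1 + 2*A*(ρ z) := by
          have : 2*A*(-(1/(4*A))) = -(1/2) := by field_simp; ring
          nlinarith
        have h2t : 1 + 2*A*(ρ z) ≤ 1 := by nlinarith
        nlinarith [mul_le_mul_of_nonneg_left hlapb.1 h1t.le,
          mul_le_mul_of_nonneg_left hgc.le (by positivity : (0:ℝ) ≤ 2*A),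
          mul_le_mul_of_nonneg_right h2t hM0.le]
  · -- equality near the boundary
    intro z hz
    exact lam_eq hA (le_of_lt hz.2)
end
end

section
/- Let g₁, g₂ be holomorphic functions on an open set U ⊂ ℂⁿ with |g(z)|² := |g₁(z)|² + |g₂(z)|² > 0 for all z ∈ U. Then for all z ∈ U and all 1 ≤ j, k ≤ n: ∂² log|g|²/∂z_j∂z̄_k = |g|^{−4} (g₂ ∂g₁/∂z_j − g₁ ∂g₂/∂z_j) · conj(g₂ ∂g₁/∂z_k − g₁ ∂g₂/∂z_k). -/
open MeasureTheory Filter Complex Set Bornology ENNReal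

noncomputable section

section AuxWirtinger
variable {n : ℕ} {f g : Cn n → ℂ} {z : Cn n} {j : Fin n}

lemma wder_congr (h : f =ᶠ[nhds z] g) : wder j f z = wder j g z := by
  unfold wder; rw [h.fderiv_eq]

lemma wbar_congr (h : f =ᶠ[nhds z] g) : wbar j f z = wbar j g z := by
  unfold wbar; rw [h.fderiv_eq]

lemma wder_comp {c : ℂ → ℂ} {c' : ℂ} (hc : HasDerivAt c c' (f z))
    (hf : DifferentiableAt ℝ f z) :
    wder j (fun w => c (f w)) z = c' * wder j f z := by
  have H : HasFDerivAt (fun w => c (f w))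
      ((((1 : ℂ →L[ℂ] ℂ).smulRight c').restrictScalars ℝ).comp (fderiv ℝ f z)) z :=
    (hc.hasFDerivAt.restrictScalars ℝ).comp z hf.hasFDerivAt
  unfold wder
  rw [H.fderiv]
  simp [ContinuousLinearMap.comp_apply, smul_eq_mul]
  ring

lemma wbar_comp {c : ℂ → ℂ} {c' : ℂ} (hc : HasDerivAt c c' (f z))
    (hf : DifferentiableAt ℝ f z) :
    wbar j (fun w => c (f w)) z = c' * wbar j f z := by
  have H : HasFDerivAt (fun w => c (f w))
      ((((1 : ℂ →L[ℂ] ℂ).smulRight c').restrictScalars ℝ).comp (fderiv ℝ f z)) z :=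
    (hc.hasFDerivAt.restrictScalars ℝ).comp z hf.hasFDerivAt
  unfold wbar
  rw [H.fderiv]
  simp [ContinuousLinearMap.comp_apply, smul_eq_mul]
  ring

lemma wder_mul (hf : DifferentiableAt ℝ f z) (hg : DifferentiableAt ℝ g z) :
    wder j (fun w => f w * g w) z = f z * wder j g z + g z * wder j f z := by
  unfold wder
  rw [fderiv_fun_mul hf hg]
  simp [smul_eq_mul]
  ring

lemma wbar_mul (hf : DifferentiableAt ℝ f z) (hg : DifferentiableAt ℝ g z) :
    wbar j (fun w => f w * g w) z = f z * wbar j g z + g z * wbar j f z := by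
  unfold wbar
  rw [fderiv_fun_mul hf hg]
  simp [smul_eq_mul]
  ring

lemma wder_add (hf : DifferentiableAt ℝ f z) (hg : DifferentiableAt ℝ g z) :
    wder j (fun w => f w + g w) z = wder j f z + wder j g z := by
  unfold wder
  rw [fderiv_fun_add hf hg]
  simp
  ring

lemma wbar_add (hf : DifferentiableAt ℝ f z) (hg : DifferentiableAt ℝ g z) :
    wbar j (fun w => f w + g w) z = wbar j f z + wbar j g z := by
  unfold wbar
  rw [fderiv_fun_add hf hg]
  simp
  ring

lemma diff_conj (hf : DifferentiableAt ℝ f z) :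
    DifferentiableAt ℝ (fun w => (starRingEnd ℂ) (f w)) z :=
  (Complex.conjCLE.differentiable.differentiableAt).comp z hf

lemma wder_conj (hf : DifferentiableAt ℝ f z) :
    wder j (fun w => (starRingEnd ℂ) (f w)) z = (starRingEnd ℂ) (wbar j f z) := by
  have H : HasFDerivAt (fun w => (starRingEnd ℂ) (f w))
      ((Complex.conjCLE.toContinuousLinearMap).comp (fderiv ℝ f z)) z :=
    (Complex.conjCLE.toContinuousLinearMap.hasFDerivAt).comp z hf.hasFDerivAt
  unfold wder wbar
  rw [H.fderiv]
  simp [ContinuousLinearMap.comp_apply, map_add, map_div₀, map_mul, Complex.conj_I, map_ofNat]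
  try ring

lemma wbar_conj (hf : DifferentiableAt ℝ f z) :
    wbar j (fun w => (starRingEnd ℂ) (f w)) z = (starRingEnd ℂ) (wder j f z) := by
  have H : HasFDerivAt (fun w => (starRingEnd ℂ) (f w))
      ((Complex.conjCLE.toContinuousLinearMap).comp (fderiv ℝ f z)) z :=
    (Complex.conjCLE.toContinuousLinearMap.hasFDerivAt).comp z hf.hasFDerivAt
  unfold wder wbar
  rw [H.fderiv]
  simp [ContinuousLinearMap.comp_apply, map_sub, map_div₀, map_mul, Complex.conj_I, map_ofNat]
  try ring

lemma wbar_holo (hf : DifferentiableAt ℂ f z) : wbar j f z = 0 := by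
  unfold wbar
  rw [hf.fderiv_restrictScalars (𝕜 := ℝ)]
  simp [ContinuousLinearMap.coe_restrictScalars', _root_.map_smul, smul_eq_mul]
  linear_combination (fderiv ℂ f z (sdir j)) * Complex.I_mul_I

lemma wder_holo (hf : DifferentiableAt ℂ f z) : wder j f z = fderiv ℂ f z (sdir j) := by
  unfold wder
  rw [hf.fderiv_restrictScalars (𝕜 := ℝ)]
  simp [ContinuousLinearMap.coe_restrictScalars', _root_.map_smul, smul_eq_mul]
  linear_combination (-(fderiv ℂ f z (sdir j))/2) * Complex.I_mul_I

end AuxWirtinger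

open Metric
variable {n : ℕ} {U : Set (Cn n)} {g : Cn n → ℂ}

/-- Cauchy-integral representation of a directional derivative of a holomorphic function. -/
lemma slice_rep (hU : IsOpen U) (hg : DifferentiableOn ℂ g U) {w v : Cn n} (hv : ‖v‖ ≤ 1)
    {r : ℝ} (hr : 0 < r) (hball : ∀ t : ℂ, ‖t‖ ≤ r → w + t • v ∈ U) :
    fderiv ℂ g w v = (2 * Real.pi * I : ℂ)⁻¹ *
      ∫ θ in (0:ℝ)..2 * Real.pi,
        (I * (circleMap 0 r θ)⁻¹) * g (w + circleMap 0 r θ • v) := by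
  set ψ : ℂ → ℂ := fun t => g (w + t • v) with hψdef
  have hA : ∀ t : ℂ, DifferentiableAt ℂ (fun s : ℂ => w + s • v) t := fun t =>
    (differentiableAt_const w).add ((differentiableAt_id).smul_const v)
  have hmem : ∀ t : ℂ, t ∈ closedBall (0:ℂ) r → w + t • v ∈ U := by
    intro t ht
    exact hball t (by simpa using ht)
  have hψ : DifferentiableOn ℂ ψ (closedBall (0:ℂ) r) := by
    intro t ht
    exact (((hg (w + t • v) (hmem t ht)).differentiableAt
      (hU.mem_nhds (hmem t ht))).comp t (hA t)).differentiableWithinAt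
  obtain ⟨R, hR⟩ : ∃ R : NNReal, (R:ℝ) = r := ⟨⟨r, hr.le⟩, rfl⟩
  have hψ' : DifferentiableOn ℂ ψ (closedBall (0:ℂ) (R:ℝ)) := by rw [hR]; exact hψ
  have hps := hψ'.hasFPowerSeriesOnBall (by exact_mod_cast hr.trans_eq hR.symm : 0 < R)
  have hd0 : HasDerivAt ψ (fderiv ℂ g w v) 0 := by
    have hA0 : HasDerivAt (fun s : ℂ => w + s • v) v 0 := by
      simpa using ((hasDerivAt_id (0:ℂ)).smul_const v).const_add w
    have hwU : w ∈ U := by have := hball 0 (by simp [hr.le]); simpa using this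
    have hgd : HasFDerivAt g (fderiv ℂ g w) w :=
      ((hg w hwU).differentiableAt (hU.mem_nhds hwU)).hasFDerivAt
    have hgd' : HasFDerivAt g (fderiv ℂ g w) (w + (0:ℂ) • v) := by simpa using hgd
    have := hgd'.comp_hasDerivAt (0:ℂ) hA0
    exact this
  have hder : fderiv ℂ g w v = cauchyPowerSeries ψ 0 r 1 (fun _ => 1) := by
    rw [← hd0.deriv, ← hR]
    exact hps.hasFPowerSeriesAt.deriv
  rw [hder, cauchyPowerSeries_apply]
  rw [smul_eq_mul]
  congr 1
  rw [circleIntegral]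
  refine intervalIntegral.integral_congr fun θ _ => ?_
  have hne : circleMap 0 r θ ≠ 0 := circleMap_ne_center hr.ne'
  simp only [deriv_circleMap, sub_zero, smul_eq_mul, hψdef]
  field_simp

lemma op_bound (hU : IsOpen U) (hg : DifferentiableOn ℂ g U) {w : Cn n} {r M : ℝ}
    (hr : 0 < r) (hsub : closedBall w r ⊆ U)
    (hM : ∀ x ∈ closedBall w r, ‖g x‖ ≤ M) : ‖fderiv ℂ g w‖ ≤ M / r := by
  have hM0 : 0 ≤ M := (norm_nonneg _).trans (hM w (mem_closedBall_self hr.le))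
  refine ContinuousLinearMap.opNorm_le_bound _ (by positivity) fun u => ?_
  rcases eq_or_ne u 0 with rfl | hu
  · simp
  · set v : Cn n := ((‖u‖:ℂ))⁻¹ • u with hv
    have hvn : ‖v‖ = 1 := by
      rw [hv, norm_smul]
      simp [norm_inv, norm_ne_zero_iff.2 hu]
    have hball : ∀ t : ℂ, ‖t‖ ≤ r → w + t • v ∈ U := by
      intro t ht
      apply hsub
      simp only [mem_closedBall, dist_self_add_left]
      rw [norm_smul, hvn, mul_one]
      exact ht
    have hrep := slice_rep hU hg hvn.le hr hball
    have hbnd : ‖fderiv ℂ g w v‖ ≤ M / r := by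
      rw [hrep, norm_mul]
      have h1 : ‖(2 * Real.pi * I : ℂ)⁻¹‖ = (2 * Real.pi)⁻¹ := by
        rw [norm_inv, norm_mul, norm_mul, Complex.norm_I, mul_one]
        simp [Real.pi_nonneg]
      have h2 : ‖∫ θ in (0:ℝ)..2 * Real.pi,
          (I * (circleMap 0 r θ)⁻¹) * g (w + circleMap 0 r θ • v)‖
          ≤ r⁻¹ * M * |2 * Real.pi - 0| := by
        apply intervalIntegral.norm_integral_le_of_norm_le_const
        intro θ _
        rw [norm_mul, norm_mul, Complex.norm_I, one_mul, norm_inv]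
        have h3 : ‖circleMap 0 r θ‖ = r := by
          rw [norm_circleMap_zero, abs_of_pos hr]
        rw [h3]
        have h4 : w + circleMap 0 r θ • v ∈ closedBall w r := by
          simp only [mem_closedBall, dist_self_add_left]
          rw [norm_smul, hvn, mul_one, h3]
        exact mul_le_mul_of_nonneg_left (hM _ h4) (by positivity)
      calc ‖(2 * Real.pi * I : ℂ)⁻¹‖ * ‖_‖ ≤ (2 * Real.pi)⁻¹ * (r⁻¹ * M * |2 * Real.pi - 0|) := by
            rw [h1]
            exact mul_le_mul_of_nonneg_left h2 (by positivity)
        _ = M / r := by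
            rw [sub_zero, abs_of_pos Real.two_pi_pos]
            field_simp
    have hu' : u = ((‖u‖:ℂ)) • v := by
      rw [hv, smul_smul]
      rw [mul_inv_cancel₀ (by exact_mod_cast norm_ne_zero_iff.2 hu)]
      simp
    calc ‖(fderiv ℂ g w) u‖ = ‖u‖ * ‖fderiv ℂ g w v‖ := by
          conv_lhs => rw [hu']
          rw [_root_.map_smul, norm_smul]
          simp
      _ ≤ ‖u‖ * (M / r) := mul_le_mul_of_nonneg_left hbnd (norm_nonneg _)
      _ = M / r * ‖u‖ := mul_comm _ _

set_option maxHeartbeats 1000000 in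
set_option synthInstance.maxHeartbeats 1000000 in
lemma key_diff (hU : IsOpen U) (hg : DifferentiableOn ℂ g U) {z : Cn n} (hz : z ∈ U)
    {v : Cn n} (hv : ‖v‖ ≤ 1) :
    DifferentiableAt ℂ (fun w => fderiv ℂ g w v) z := by
  obtain ⟨ε, hε, hsub⟩ := (Metric.nhds_basis_closedBall.mem_iff).1 (hU.mem_nhds hz)
  set r : ℝ := ε / 3 with hrdef
  have hr : 0 < r := by positivity
  obtain ⟨M, hM⟩ := (isCompact_closedBall z ε).exists_bound_of_continuousOn
    (hg.continuousOn.mono hsub)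
  have hMr : 0 ≤ M := (norm_nonneg _).trans (hM z (mem_closedBall_self hε.le))
  -- membership helpers
  have hball2U : ball z (2 * r) ⊆ U := fun x hx => hsub (by
    simp only [mem_ball] at hx
    simp only [mem_closedBall]
    nlinarith)
  have hmemb : ∀ x ∈ ball z r, ∀ t : ℂ, ‖t‖ ≤ r → x + t • v ∈ ball z (2 * r) := by
    intro x hx t ht
    simp only [mem_ball] at hx ⊢
    calc dist (x + t • v) z ≤ ‖t • v‖ + dist x z := by
          rw [dist_eq_norm]
          have : x + t • v - z = t • v + (x - z) := by abel
          rw [this]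
          exact (norm_add_le _ _).trans (by rw [dist_eq_norm])
      _ < r + r := by
          have : ‖t • v‖ ≤ r := by
            rw [norm_smul]
            calc ‖t‖ * ‖v‖ ≤ r * 1 := mul_le_mul ht hv (norm_nonneg _) hr.le
              _ = r := mul_one r
          linarith
      _ = 2 * r := by ring
  -- operator norm bound on ball z (2r)
  have hop : ∀ x ∈ ball z (2 * r), ‖fderiv ℂ g x‖ ≤ M / r := by
    intro x hx
    have hsub' : closedBall x r ⊆ closedBall z ε := by
      intro y hy
      simp only [mem_closedBall] at hy ⊢
      simp only [mem_ball] at hx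
      calc dist y z ≤ dist y x + dist x z := dist_triangle _ _ _
        _ ≤ r + 2 * r := by linarith
        _ = ε := by rw [hrdef]; ring
    exact op_bound hU hg hr (hsub'.trans hsub) (fun y hy => hM y (hsub' hy))
  set γ : ℝ → ℂ := circleMap 0 r with hγ
  have hγne : ∀ θ, γ θ ≠ 0 := fun θ => circleMap_ne_center hr.ne'
  have hγnorm : ∀ θ, ‖γ θ‖ = r := fun θ => by
    rw [hγ, norm_circleMap_zero, abs_of_pos hr]
  set F : Cn n → ℝ → ℂ := fun x θ => (I * (γ θ)⁻¹) * g (x + γ θ • v) with hF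
  set F' : Cn n → ℝ → (Cn n →L[ℂ] ℂ) :=
    fun x θ => (I * (γ θ)⁻¹) • fderiv ℂ g (x + γ θ • v) with hF'
  have hcont : ∀ x ∈ ball z r, Continuous (F x) := by
    intro x hx
    apply Continuous.mul
    · exact continuous_const.mul ((continuous_circleMap 0 r).inv₀ hγne)
    · apply (hg.continuousOn).comp_continuous
      · exact continuous_const.add ((continuous_circleMap 0 r).smul continuous_const)
      · exact fun θ => hball2U (hmemb x hx (γ θ) (hγnorm θ).le)
  -- measurability of F' z
  letI : MeasurableSpace (Cn n →L[ℂ] ℂ) := borel _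
  haveI : BorelSpace (Cn n →L[ℂ] ℂ) := ⟨rfl⟩
  have hF'meas : AEStronglyMeasurable (F' z)
      (volume.restrict (Set.uIoc (0:ℝ) (2 * Real.pi))) := by
    refine AEStronglyMeasurable.smul (f := fun θ => I * (γ θ)⁻¹)
      (g := fun θ => fderiv ℂ g (z + γ θ • v)) ?_ ?_
    · exact (continuous_const.mul ((continuous_circleMap 0 r).inv₀ hγne)).aestronglyMeasurable
    · have h1 : Measurable fun θ : ℝ => fderiv ℂ g (z + γ θ • v) :=
        (measurable_fderiv ℂ g).comp
          (continuous_const.add ((continuous_circleMap 0 r).smul continuous_const)).measurable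
      exact h1.stronglyMeasurable.aestronglyMeasurable
  have hΦ : HasFDerivAt (fun x => ∫ θ in (0:ℝ)..2 * Real.pi, F x θ)
      (∫ θ in (0:ℝ)..2 * Real.pi, F' z θ) z := by
    apply intervalIntegral.hasFDerivAt_integral_of_dominated_of_fderiv_le
      (bound := fun _ => r⁻¹ * (M / r)) (ball_mem_nhds z hr)
    · filter_upwards [ball_mem_nhds z hr] with x hx
      exact (hcont x hx).aestronglyMeasurable
    · exact (hcont z (mem_ball_self hr)).intervalIntegrable _ _
    · exact hF'meas
    · apply Filter.Eventually.of_forall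
      intro θ _ x hx
      show ‖(I * (γ θ)⁻¹) • fderiv ℂ g (x + γ θ • v)‖ ≤ r⁻¹ * (M / r)
      rw [norm_smul, norm_mul, Complex.norm_I, one_mul, norm_inv, hγnorm θ]
      exact mul_le_mul_of_nonneg_left (hop _ (hmemb x hx (γ θ) (hγnorm θ).le)) (by positivity)
    · exact intervalIntegrable_const
    · apply Filter.Eventually.of_forall
      intro θ _ x hx
      have hxmem : x + γ θ • v ∈ U := hball2U (hmemb x hx (γ θ) (hγnorm θ).le)
      have h1 : HasFDerivAt (fun y : Cn n => y + γ θ • v)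
          (ContinuousLinearMap.id ℂ (Cn n)) x := (hasFDerivAt_id x).add_const _
      have h2 : HasFDerivAt g (fderiv ℂ g (x + γ θ • v)) (x + γ θ • v) :=
        ((hg _ hxmem).differentiableAt (hU.mem_nhds hxmem)).hasFDerivAt
      have h3 := (h2.comp x h1).const_mul (I * (γ θ)⁻¹)
      simpa [ContinuousLinearMap.comp_id, Function.comp] using h3
  have heq : (fun w => fderiv ℂ g w v) =ᶠ[nhds z]
      fun w => (2 * Real.pi * I : ℂ)⁻¹ * ∫ θ in (0:ℝ)..2 * Real.pi, F w θ := by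
    filter_upwards [ball_mem_nhds z hr] with x hx
    exact slice_rep hU hg hv hr (fun t ht => hball2U (hmemb x hx t ht))
  exact (hΦ.differentiableAt.const_mul _).congr_of_eventuallyEq heq


/-- **The Hessian of `log|g|²` for two generators**.
For holomorphic `g₁, g₂` with `|g|² = |g₁|² + |g₂|² > 0`:
`∂²log|g|²/∂z_j∂z̄_k = |g|⁻⁴ (g₂∂g₁/∂z_j - g₁∂g₂/∂z_j) ⋅ conj(g₂∂g₁/∂z_k - g₁∂g₂/∂z_k)`. -/
theorem hessian_log_two_generators {n : ℕ} (U : Set (Cn n)) (hU : IsOpen U)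
    (g₁ g₂ : Cn n → ℂ)
    (hg₁ : DifferentiableOn ℂ g₁ U) (hg₂ : DifferentiableOn ℂ g₂ U)
    (hpos : ∀ z ∈ U, 0 < ‖g₁ z‖ ^ 2 + ‖g₂ z‖ ^ 2)
    (z : Cn n) (hz : z ∈ U) (j k : Fin n) :
    hessC j k (fun w => ((Real.log (‖g₁ w‖ ^ 2 + ‖g₂ w‖ ^ 2) : ℝ) : ℂ)) z =
      (((‖g₁ z‖ ^ 2 + ‖g₂ z‖ ^ 2 : ℝ) : ℂ) ^ 2)⁻¹ *
        (g₂ z * wder j g₁ z - g₁ z * wder j g₂ z) *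
        (starRingEnd ℂ) (g₂ z * wder k g₁ z - g₁ z * wder k g₂ z) := by
  have hsd : ‖sdir (n := n) k‖ ≤ 1 := by
    simp [sdir, EuclideanSpace.norm_single]
  have hg₁at : ∀ w ∈ U, DifferentiableAt ℂ g₁ w := fun w hw =>
    (hg₁ w hw).differentiableAt (hU.mem_nhds hw)
  have hg₂at : ∀ w ∈ U, DifferentiableAt ℂ g₂ w := fun w hw =>
    (hg₂ w hw).differentiableAt (hU.mem_nhds hw)
  set Q : Cn n → ℂ := fun w => g₁ w * (starRingEnd ℂ) (g₁ w) + g₂ w * (starRingEnd ℂ) (g₂ w)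
    with hQdef
  have hQofReal : ∀ w, Q w = ((‖g₁ w‖ ^ 2 + ‖g₂ w‖ ^ 2 : ℝ) : ℂ) := by
    intro w
    simp only [hQdef, Complex.mul_conj, Complex.normSq_eq_norm_sq]
    push_cast
    ring
  have hQsp : ∀ w ∈ U, Q w ∈ slitPlane := by
    intro w hw; rw [hQofReal w]; exact Complex.ofReal_mem_slitPlane.2 (hpos w hw)
  have hQne : ∀ w ∈ U, Q w ≠ 0 := by
    intro w hw; rw [hQofReal w]; exact_mod_cast (hpos w hw).ne'
  have hQR : ∀ w ∈ U, DifferentiableAt ℝ Q w := by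
    intro w hw
    exact (((hg₁at w hw).restrictScalars ℝ).mul (diff_conj ((hg₁at w hw).restrictScalars ℝ))).add
      (((hg₂at w hw).restrictScalars ℝ).mul (diff_conj ((hg₂at w hw).restrictScalars ℝ)))
  set d₁ : Cn n → ℂ := fun w => fderiv ℂ g₁ w (sdir k) with hd₁def
  set d₂ : Cn n → ℂ := fun w => fderiv ℂ g₂ w (sdir k) with hd₂def
  have hinner : ∀ w ∈ U,
      wbar k (fun x => ((Real.log (‖g₁ x‖ ^ 2 + ‖g₂ x‖ ^ 2) : ℝ) : ℂ)) w
        = (Q w)⁻¹ * (g₁ w * (starRingEnd ℂ) (d₁ w) + g₂ w * (starRingEnd ℂ) (d₂ w)) := by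
    intro w hw
    have h1R := (hg₁at w hw).restrictScalars ℝ
    have h2R := (hg₂at w hw).restrictScalars ℝ
    have heq : (fun x => ((Real.log (‖g₁ x‖ ^ 2 + ‖g₂ x‖ ^ 2) : ℝ) : ℂ))
        =ᶠ[nhds w] fun x => Complex.log (Q x) := by
      filter_upwards [hU.mem_nhds hw] with x hx
      rw [hQofReal x, Complex.ofReal_log (hpos x hx).le]
    rw [wbar_congr heq]
    have hcomp : wbar k (fun x => Complex.log (Q x)) w = (Q w)⁻¹ * wbar k Q w :=
      wbar_comp (Complex.hasDerivAt_log (hQsp w hw)) (hQR w hw)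
    rw [hcomp]
    congr 1
    have m1 : wbar k (fun x => g₁ x * (starRingEnd ℂ) (g₁ x)) w
        = g₁ w * wbar k (fun x => (starRingEnd ℂ) (g₁ x)) w
          + (starRingEnd ℂ) (g₁ w) * wbar k g₁ w := wbar_mul h1R (diff_conj h1R)
    have m2 : wbar k (fun x => g₂ x * (starRingEnd ℂ) (g₂ x)) w
        = g₂ w * wbar k (fun x => (starRingEnd ℂ) (g₂ x)) w
          + (starRingEnd ℂ) (g₂ w) * wbar k g₂ w := wbar_mul h2R (diff_conj h2R)
    have hQw : wbar k Q w = wbar k (fun x => g₁ x * (starRingEnd ℂ) (g₁ x)) w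
        + wbar k (fun x => g₂ x * (starRingEnd ℂ) (g₂ x)) w :=
      wbar_add (h1R.mul (diff_conj h1R)) (h2R.mul (diff_conj h2R))
    rw [hQw, m1, m2, wbar_conj h1R, wbar_conj h2R, wbar_holo (hg₁at w hw),
      wbar_holo (hg₂at w hw), wder_holo (hg₁at w hw), wder_holo (hg₂at w hw)]
    ring
  have hd₁C : DifferentiableAt ℂ d₁ z := key_diff hU hg₁ hz hsd
  have hd₂C : DifferentiableAt ℂ d₂ z := key_diff hU hg₂ hz hsd
  have h1R := (hg₁at z hz).restrictScalars ℝ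
  have h2R := (hg₂at z hz).restrictScalars ℝ
  have hd₁R := hd₁C.restrictScalars ℝ
  have hd₂R := hd₂C.restrictScalars ℝ
  have hNR : DifferentiableAt ℝ
      (fun w => g₁ w * (starRingEnd ℂ) (d₁ w) + g₂ w * (starRingEnd ℂ) (d₂ w)) z :=
    (h1R.mul (diff_conj hd₁R)).add (h2R.mul (diff_conj hd₂R))
  have hQinvR : DifferentiableAt ℝ (fun w => (Q w)⁻¹) z := (hQR z hz).inv (hQne z hz)
  have hev : (fun w => wbar k (fun x => ((Real.log (‖g₁ x‖ ^ 2 + ‖g₂ x‖ ^ 2) : ℝ) : ℂ)) w)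
      =ᶠ[nhds z] fun w => (Q w)⁻¹ *
        (g₁ w * (starRingEnd ℂ) (d₁ w) + g₂ w * (starRingEnd ℂ) (d₂ w)) := by
    filter_upwards [hU.mem_nhds hz] with x hx
    exact hinner x hx
  have e4 : wder j (fun w => (Q w)⁻¹ *
        (g₁ w * (starRingEnd ℂ) (d₁ w) + g₂ w * (starRingEnd ℂ) (d₂ w))) z
      = (Q z)⁻¹ * wder j (fun w => g₁ w * (starRingEnd ℂ) (d₁ w)
          + g₂ w * (starRingEnd ℂ) (d₂ w)) z
        + (g₁ z * (starRingEnd ℂ) (d₁ z) + g₂ z * (starRingEnd ℂ) (d₂ z))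
          * wder j (fun w => (Q w)⁻¹) z := wder_mul hQinvR hNR
  have e1 : wder j (fun w => (Q w)⁻¹) z = -(Q z ^ 2)⁻¹ * wder j Q z :=
    wder_comp (hasDerivAt_inv (hQne z hz)) (hQR z hz)
  have e2 : wder j Q z = (starRingEnd ℂ) (g₁ z) * wder j g₁ z
      + (starRingEnd ℂ) (g₂ z) * wder j g₂ z := by
    have hQw : wder j Q z = wder j (fun x => g₁ x * (starRingEnd ℂ) (g₁ x)) z
        + wder j (fun x => g₂ x * (starRingEnd ℂ) (g₂ x)) z :=
      wder_add (h1R.mul (diff_conj h1R)) (h2R.mul (diff_conj h2R))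
    rw [hQw, wder_mul h1R (diff_conj h1R), wder_mul h2R (diff_conj h2R),
      wder_conj h1R, wder_conj h2R, wbar_holo (hg₁at z hz), wbar_holo (hg₂at z hz)]
    simp only [map_zero]
    ring
  have e3 : wder j (fun w => g₁ w * (starRingEnd ℂ) (d₁ w)
        + g₂ w * (starRingEnd ℂ) (d₂ w)) z
      = (starRingEnd ℂ) (d₁ z) * wder j g₁ z + (starRingEnd ℂ) (d₂ z) * wder j g₂ z := by
    rw [wder_add (f := fun w => g₁ w * (starRingEnd ℂ) (d₁ w))
        (g := fun w => g₂ w * (starRingEnd ℂ) (d₂ w))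
        (h1R.mul (diff_conj hd₁R)) (h2R.mul (diff_conj hd₂R)),
      wder_mul h1R (diff_conj hd₁R), wder_mul h2R (diff_conj hd₂R),
      wder_conj hd₁R, wder_conj hd₂R, wbar_holo hd₁C, wbar_holo hd₂C]
    simp only [map_zero]
    ring
  have e5 : wder k g₁ z = d₁ z := wder_holo (hg₁at z hz)
  have e6 : wder k g₂ z = d₂ z := wder_holo (hg₂at z hz)
  have hmain : hessC j k (fun w => ((Real.log (‖g₁ w‖ ^ 2 + ‖g₂ w‖ ^ 2) : ℝ) : ℂ)) z
      = wder j (fun w => (Q w)⁻¹ *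
          (g₁ w * (starRingEnd ℂ) (d₁ w) + g₂ w * (starRingEnd ℂ) (d₂ w))) z :=
    wder_congr hev
  rw [hmain, e4, e1, e2, e3, e5, e6]
  have hC : ((‖g₁ z‖ ^ 2 + ‖g₂ z‖ ^ 2 : ℝ) : ℂ)
      = g₁ z * (starRingEnd ℂ) (g₁ z) + g₂ z * (starRingEnd ℂ) (g₂ z) := (hQofReal z).symm
  have hne : g₁ z * (starRingEnd ℂ) (g₁ z) + g₂ z * (starRingEnd ℂ) (g₂ z) ≠ 0 := by
    rw [← hC]; exact_mod_cast (hpos z hz).ne'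
  simp only [hQdef, hC, map_sub, map_mul]
  field_simp
  ring
end
end
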